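/- Let c > 1 and a_k, b_∞ as usual (a_0 = 1, a_k = (-1)^k c^k/∏_{l=1}^k(c^l-1), b_∞ = (∏_{l=1}^∞(1-c^{-l}))^{-1}). For each i ∈ ℤ and t > 0, the series ∑_{k=0}^∞ a_k e^{-c^{-i+k} t} converges absolutely, and its value lies in [0, 1/b_∞], i.e. b_∞ ∑_{k=0}^∞ a_k e^{-c^{-i+k}t} ∈ [0,1]. -/

import Mathlib

open Finset Real Filter Topology

noncomputable def AS.A (c : ℝ) (k : ℕ) : ℝ :=
  (-1 : ℝ) ^ k * c ^ k / ∏ l ∈ Finset.Icc 1 k, (c ^ l - 1)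

noncomputable def AS.Q (c : ℝ) (n : ℕ) : ℝ :=
  ∏ l ∈ Finset.range n, (1 - c⁻¹ ^ (l + 1))

noncomputable def AS.g (c : ℝ) (n : ℕ) (u : ℝ) : ℝ :=
  ∑ k ∈ Finset.range (n+1), AS.A c k / AS.Q c (n-k) * Real.exp (-(c^k * u))

namespace AS
variable {c : ℝ}

lemma hq0 (hc : 1 < c) : 0 < c⁻¹ := inv_pos.mpr (lt_trans one_pos hc)
lemma hq1 (hc : 1 < c) : c⁻¹ < 1 := inv_lt_one_of_one_lt₀ hc
lemma one_sub_q_pos (hc : 1 < c) (j : ℕ) : 0 < 1 - c⁻¹ ^ (j+1) := by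
  have h : c⁻¹ ^ (j+1) < 1 := pow_lt_one₀ (hq0 hc).le (hq1 hc) (by omega)
  linarith

lemma prod_pos (hc : 1 < c) (k : ℕ) : 0 < ∏ l ∈ Finset.Icc 1 k, (c ^ l - 1) := by
  apply Finset.prod_pos
  intro l hl
  simp only [Finset.mem_Icc] at hl
  have : (1:ℝ) < c ^ l := one_lt_pow₀ hc (by omega)
  linarith

lemma A_zero (c : ℝ) : A c 0 = 1 := by simp [A]

lemma A_succ (hc : 1 < c) (k : ℕ) :
    A c (k + 1) * (1 - c⁻¹ ^ (k + 1)) = -(c⁻¹ ^ k) * A c k := by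
  have hprod : ∏ l ∈ Finset.Icc 1 (k+1), (c ^ l - 1)
      = (∏ l ∈ Finset.Icc 1 k, (c ^ l - 1)) * (c ^ (k+1) - 1) := by
    rw [Finset.prod_Icc_succ_top (Nat.le_add_left 1 k)]
  have hPk := (prod_pos hc k).ne'
  have hcne : c ≠ 0 := by positivity
  have h3 : c ^ (k+1) - 1 ≠ 0 := by
    have : (1:ℝ) < c ^ (k+1) := one_lt_pow₀ hc (Nat.succ_ne_zero k)
    linarith
  rw [A, A, hprod]
  simp only [inv_pow]
  field_simp
  ring

lemma Q_zero (c : ℝ) : Q c 0 = 1 := by simp [Q]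
lemma Q_succ (c : ℝ) (n : ℕ) : Q c (n+1) = Q c n * (1 - c⁻¹ ^ (n+1)) := Finset.prod_range_succ _ n
lemma Q_pos (hc : 1 < c) (n : ℕ) : 0 < Q c n :=
  Finset.prod_pos fun l _ => one_sub_q_pos hc l
lemma Q_le_one (hc : 1 < c) (n : ℕ) : Q c n ≤ 1 := by
  apply Finset.prod_le_one
  · intro l _; linarith [one_sub_q_pos hc l]
  · intro l _; linarith [pow_pos (hq0 hc) (l+1)]

lemma key (hc : 1 < c) : ∀ (m : ℕ) (x : ℝ),
    ∑ k ∈ Finset.range (m+1), A c k * x^k / Q c (m-k)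
      = (∏ j ∈ Finset.range m, (1 - x * c⁻¹ ^ j)) / Q c m := by
  intro m
  induction m with
  | zero => intro x; simp [A_zero, Q_zero]
  | succ m IH =>
    intro x
    have hQmne : Q c m ≠ 0 := (Q_pos hc m).ne'
    have h1ne : (1 - c⁻¹^(m+1)) ≠ 0 := (one_sub_q_pos hc m).ne'
    have hprod : ∏ j ∈ Finset.range (m+1), (1 - x * c⁻¹ ^ j)
        = (∏ j ∈ Finset.range m, (1 - (x*c⁻¹) * c⁻¹ ^ j)) * (1 - x) := by
      rw [Finset.prod_range_succ']
      congr 1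
      · exact Finset.prod_congr rfl fun j _ => by rw [pow_succ]; ring
      · simp
    have hS : Q c m * (∑ k ∈ Finset.range (m+1), A c k * (x*c⁻¹)^k / Q c (m-k))
        = ∏ j ∈ Finset.range m, (1 - (x*c⁻¹) * c⁻¹ ^ j) := by
      rw [IH (x*c⁻¹), mul_div_cancel₀ _ hQmne]
    have E : (∑ k ∈ Finset.range (m+1+1), A c k * x^k / Q c (m+1-k)) * (1 - c⁻¹^(m+1))
        + (∑ k ∈ Finset.range (m+1), A c k * (x*c⁻¹)^k / Q c (m-k)) * x
        = ∑ k ∈ Finset.range (m+1), A c k * (x*c⁻¹)^k / Q c (m-k) := by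
      rw [Finset.sum_mul, Finset.sum_mul]
      rw [Finset.sum_range_succ (f := fun k => A c k * x^k / Q c (m+1-k) * (1-c⁻¹^(m+1)))]
      rw [Finset.sum_range_succ (f := fun k => A c k * (x*c⁻¹)^k / Q c (m-k) * x)]
      rw [Finset.sum_range_succ' (f := fun k => A c k * x^k / Q c (m+1-k) * (1-c⁻¹^(m+1)))]
      rw [Finset.sum_range_succ' (f := fun k => A c k * (x*c⁻¹)^k / Q c (m-k))]
      have hterm : ∀ k ∈ Finset.range m,
          A c (k+1) * x^(k+1) / Q c (m+1-(k+1)) * (1-c⁻¹^(m+1))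
            + A c k * (x*c⁻¹)^k / Q c (m-k) * x
          = A c (k+1) * (x*c⁻¹)^(k+1) / Q c (m-(k+1)) := by
        intro k hk
        rw [Finset.mem_range] at hk
        obtain ⟨j, hj⟩ : ∃ j, m - k = j + 1 := ⟨m-k-1, by omega⟩
        have h2 : m + 1 - (k+1) = j + 1 := by omega
        have h3 : m - (k+1) = j := by omega
        have h5 : Q c j ≠ 0 := (Q_pos hc j).ne'
        have h6 : (1 - c⁻¹^(j+1)) ≠ 0 := (one_sub_q_pos hc j).ne'
        have hrec := A_succ hc k
        have hqq : c⁻¹^(m+1) = c⁻¹^(k+1) * c⁻¹^(j+1) := by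
          rw [← pow_add]; congr 1; omega
        rw [hj, h2, h3, Q_succ c j]
        rw [div_mul_eq_mul_div, div_mul_eq_mul_div, ← add_div,
          div_eq_div_iff (mul_ne_zero h5 h6) h5]
        linear_combination (Q c j * x^(k+1)) * hrec - (Q c j * A c (k+1) * x^(k+1)) * hqq
      have hsum : ∑ k ∈ Finset.range m,
            A c (k+1) * x^(k+1) / Q c (m+1-(k+1)) * (1-c⁻¹^(m+1))
          + ∑ k ∈ Finset.range m, A c k * (x*c⁻¹)^k / Q c (m-k) * x
          = ∑ k ∈ Finset.range m, A c (k+1) * (x*c⁻¹)^(k+1) / Q c (m-(k+1)) := by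
        rw [← Finset.sum_add_distrib]
        exact Finset.sum_congr rfl hterm
      have hlast : A c (m+1) * x^(m+1) / Q c (m+1-(m+1)) * (1-c⁻¹^(m+1))
          + A c m * (x*c⁻¹)^m / Q c (m-m) * x = 0 := by
        have hrec := A_succ hc m
        simp only [Nat.sub_self, Q_zero, div_one]
        linear_combination (x^(m+1)) * hrec
      have hzero : A c 0 * x^0 / Q c (m+1-0) * (1-c⁻¹^(m+1))
          = A c 0 * (x*c⁻¹)^0 / Q c (m-0) := by
        simp only [pow_zero, Nat.sub_zero, A_zero, one_mul, mul_one, Q_succ c m]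
        rw [div_mul_eq_mul_div, div_eq_div_iff (mul_ne_zero hQmne h1ne) hQmne]
        ring
      linarith [hsum, hlast, hzero]
    rw [hprod, ← hS, Q_succ c m]
    rw [eq_div_iff (by exact mul_ne_zero hQmne h1ne)]
    linear_combination (Q c m) * E

/-- the elementary integral -/
lemma int_exp (r u : ℝ) (hr : r ≠ 0) :
    ∫ s in (0:ℝ)..u, Real.exp (r * s) = (Real.exp (r * u) - 1) / r := by
  have hd : ∀ s ∈ Set.uIcc (0:ℝ) u,
      HasDerivAt (fun y => Real.exp (r * y) / r) (Real.exp (r * s)) s := by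
    intro s _
    have h1 : HasDerivAt (fun y : ℝ => r * y) r s := by
      simpa using (hasDerivAt_id s).const_mul r
    have h2 := h1.exp
    have h3 := h2.div_const r
    simpa [mul_div_cancel_right₀ _ hr] using h3
  have hcont : IntervalIntegrable (fun s => Real.exp (r * s)) MeasureTheory.volume 0 u :=
    (Real.continuous_exp.comp (continuous_const.mul continuous_id)).intervalIntegrable 0 u
  rw [intervalIntegral.integral_eq_sub_of_hasDerivAt hd hcont]
  simp [sub_div]

lemma g_cont (c : ℝ) (n : ℕ) : Continuous (g c n) := by
  apply continuous_finset_sum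
  intro k _
  exact continuous_const.mul (Real.continuous_exp.comp (continuous_const.mul continuous_id).neg)

lemma g_zero (c : ℝ) (u : ℝ) : g c 0 u = Real.exp (-u) := by
  simp [g, A_zero, Q_zero]

lemma g_rec (hc : 1 < c) (n : ℕ) (u : ℝ) :
    g c (n+1) u = c^(n+1) * ∫ s in (0:ℝ)..u, Real.exp (-(c^(n+1) * (u - s))) * g c n s := by
  have hc0 : (0:ℝ) < c := lt_trans one_pos hc
  have hcne : c ≠ 0 := hc0.ne'
  -- integrability of each term
  have hint : ∀ k ∈ Finset.range (n+1), IntervalIntegrable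
      (fun s => Real.exp (-(c^(n+1) * (u - s))) * (A c k / Q c (n-k) * Real.exp (-(c^k * s))))
      MeasureTheory.volume 0 u := by
    intro k _
    apply Continuous.intervalIntegrable
    continuity
  -- expand g inside the integral and swap
  have hswap : (∫ s in (0:ℝ)..u, Real.exp (-(c^(n+1) * (u - s))) * g c n s)
      = ∑ k ∈ Finset.range (n+1), ∫ s in (0:ℝ)..u,
          Real.exp (-(c^(n+1) * (u - s))) * (A c k / Q c (n-k) * Real.exp (-(c^k * s))) := by
    rw [← intervalIntegral.integral_finset_sum hint]
    congr 1
    ext s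
    rw [g, Finset.mul_sum]
  -- evaluate each integral
  have heval : ∀ k, k < n+1 → (∫ s in (0:ℝ)..u,
        Real.exp (-(c^(n+1) * (u - s))) * (A c k / Q c (n-k) * Real.exp (-(c^k * s))))
      = A c k / Q c (n-k) * ((Real.exp (-(c^k*u)) - Real.exp (-(c^(n+1)*u))) / (c^(n+1) - c^k)) := by
    intro k hk
    have hlt : c^k < c^(n+1) := pow_lt_pow_right₀ hc (by omega)
    have hne : c^(n+1) - c^k ≠ 0 := sub_ne_zero.mpr hlt.ne'
    have h1 : (∫ s in (0:ℝ)..u,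
        Real.exp (-(c^(n+1) * (u - s))) * (A c k / Q c (n-k) * Real.exp (-(c^k * s))))
        = (A c k / Q c (n-k) * Real.exp (-(c^(n+1)*u)))
          * ∫ s in (0:ℝ)..u, Real.exp ((c^(n+1) - c^k) * s) := by
      rw [← intervalIntegral.integral_const_mul]
      congr 1
      ext s
      rw [mul_assoc, ← Real.exp_add]
      rw [show -(c ^ (n+1) * u) + (c ^ (n+1) - c ^ k) * s = -(c^(n+1)*(u-s)) + -(c^k*s) by ring,
        Real.exp_add]
      ring
    have hexp : Real.exp (-(c^(n+1)*u)) * (Real.exp ((c^(n+1)-c^k)*u) - 1)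
        = Real.exp (-(c^k*u)) - Real.exp (-(c^(n+1)*u)) := by
      rw [mul_sub, mul_one, ← Real.exp_add]
      congr 2
      ring
    rw [h1, int_exp _ _ hne, mul_assoc, mul_div_assoc', hexp]
  -- rewrite the sum of integrals using heval
  have hsum1 : ∑ k ∈ Finset.range (n+1), (∫ s in (0:ℝ)..u,
        Real.exp (-(c^(n+1) * (u - s))) * (A c k / Q c (n-k) * Real.exp (-(c^k * s))))
      = ∑ k ∈ Finset.range (n+1),
          A c k / Q c (n-k) * ((Real.exp (-(c^k*u)) - Real.exp (-(c^(n+1)*u))) / (c^(n+1) - c^k)) :=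
    Finset.sum_congr rfl fun k hk => heval k (Finset.mem_range.mp hk)
  -- per-term simplification after multiplying by c^(n+1)
  have hterm : ∀ k ∈ Finset.range (n+1),
      c^(n+1) * (A c k / Q c (n-k) * ((Real.exp (-(c^k*u)) - Real.exp (-(c^(n+1)*u))) / (c^(n+1) - c^k)))
      = A c k / Q c (n+1-k) * Real.exp (-(c^k*u))
        - A c k / Q c (n+1-k) * Real.exp (-(c^(n+1)*u)) := by
    intro k hk
    rw [Finset.mem_range] at hk
    have hj : n + 1 - k = (n - k) + 1 := by omega
    have hlt : c^k < c^(n+1) := pow_lt_pow_right₀ hc (by omega)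
    have hne : c^(n+1) - c^k ≠ 0 := sub_ne_zero.mpr hlt.ne'
    have hQj : Q c (n-k) ≠ 0 := (Q_pos hc (n-k)).ne'
    have h6 : (1 - c⁻¹^((n-k)+1)) ≠ 0 := (one_sub_q_pos hc (n-k)).ne'
    have hcb : c^(n+1) * c⁻¹^((n-k)+1) = c^k := by
      rw [inv_pow, show n+1 = ((n-k)+1) + k by omega, pow_add,
        mul_comm (c ^ ((n-k)+1)) (c^k), mul_assoc, mul_inv_cancel₀ (pow_ne_zero _ hcne), mul_one]
    have hfac : c^(n+1) - c^k = c^(n+1) * (1 - c⁻¹^((n-k)+1)) := by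
      rw [mul_sub, mul_one, hcb]
    have hcp : (c:ℝ)^(n+1) ≠ 0 := pow_ne_zero _ hcne
    rw [hj, Q_succ c (n-k), hfac]
    generalize hR : (1 - c⁻¹^((n-k)+1) : ℝ) = R at h6 ⊢
    generalize hE1 : Real.exp (-(c^k*u)) = E1
    generalize hCP : (c:ℝ)^(n+1) = CP at hcp ⊢
    field_simp
  -- the vanishing-sum identity from `key` at x = 1
  have h0 : ∑ k ∈ Finset.range (n+1+1), A c k * (1:ℝ)^k / Q c (n+1-k) = 0 := by
    rw [key hc (n+1) 1]
    rw [Finset.prod_eq_zero (Finset.mem_range.mpr (Nat.succ_pos n))]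
    · exact zero_div _
    · simp
  have h0' : ∑ k ∈ Finset.range (n+1), A c k / Q c (n+1-k) = - A c (n+1) := by
    rw [Finset.sum_range_succ] at h0
    simp only [one_pow, mul_one, Nat.sub_self, Q_zero, div_one] at h0
    linarith [h0]
  -- assemble
  rw [hswap, hsum1, Finset.mul_sum]
  rw [Finset.sum_congr rfl hterm, Finset.sum_sub_distrib, ← Finset.sum_mul, h0']
  rw [g, Finset.sum_range_succ]
  simp only [Nat.sub_self, Q_zero, div_one]
  ring

lemma g_nonneg (hc : 1 < c) : ∀ (n : ℕ) (u : ℝ), 0 ≤ u → 0 ≤ g c n u := by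
  intro n
  induction n with
  | zero => intro u _; rw [g_zero]; positivity
  | succ n IH =>
    intro u hu
    rw [g_rec hc n u]
    have hL : (0:ℝ) < c^(n+1) := pow_pos (lt_trans one_pos hc) _
    apply mul_nonneg hL.le
    apply intervalIntegral.integral_nonneg hu
    intro s hs
    exact mul_nonneg (Real.exp_nonneg _) (IH s hs.1)

lemma g_le_one (hc : 1 < c) : ∀ (n : ℕ) (u : ℝ), 0 ≤ u → g c n u ≤ 1 := by
  intro n
  induction n with
  | zero =>
    intro u hu
    rw [g_zero]
    exact Real.exp_le_one_iff.mpr (by linarith)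
  | succ n IH =>
    intro u hu
    rw [g_rec hc n u]
    have hc0 : (0:ℝ) < c := lt_trans one_pos hc
    have hL : (0:ℝ) < c^(n+1) := pow_pos hc0 _
    have hLne : (c:ℝ)^(n+1) ≠ 0 := hL.ne'
    have hIeq : (∫ s in (0:ℝ)..u, Real.exp (-(c^(n+1)*(u - s))))
        = (1 - Real.exp (-(c^(n+1)*u)))/c^(n+1) := by
      have hfun : (fun s => Real.exp (-(c^(n+1)*(u-s))))
          = fun s => Real.exp (-(c^(n+1)*u)) * Real.exp (c^(n+1)*s) := by
        ext s
        rw [← Real.exp_add]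
        congr 1
        ring
      rw [hfun, intervalIntegral.integral_const_mul, int_exp _ _ hLne]
      have hee : Real.exp (-(c^(n+1)*u)) * Real.exp (c^(n+1)*u) = 1 := by
        rw [← Real.exp_add]; simp
      rw [mul_div_assoc', eq_div_iff hLne, div_mul_cancel₀ _ hLne, mul_sub, hee, mul_one]
    have hmono : (∫ s in (0:ℝ)..u, Real.exp (-(c^(n+1) * (u - s))) * g c n s)
        ≤ ∫ s in (0:ℝ)..u, Real.exp (-(c^(n+1)*(u - s))) := by
      apply intervalIntegral.integral_mono_on hu
      · exact (Continuous.mul (by continuity) (g_cont c n)).intervalIntegrable 0 u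
      · exact (by continuity : Continuous fun s => Real.exp (-(c^(n+1)*(u-s)))).intervalIntegrable 0 u
      · intro s hs
        have h1 := IH s hs.1
        have h2 := Real.exp_nonneg (-(c^(n+1)*(u-s)))
        nlinarith
    calc c^(n+1) * ∫ s in (0:ℝ)..u, Real.exp (-(c^(n+1) * (u - s))) * g c n s
        ≤ c^(n+1) * ∫ s in (0:ℝ)..u, Real.exp (-(c^(n+1)*(u - s))) :=
          mul_le_mul_of_nonneg_left hmono hL.le
      _ = 1 - Real.exp (-(c^(n+1)*u)) := by
          rw [hIeq, mul_div_cancel₀ _ hLne]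
      _ ≤ 1 := by linarith [Real.exp_nonneg (-(c^(n+1)*u))]


/-- summability of |A k| c^k -/
lemma summableA (hc : 1 < c) : Summable (fun k => |A c k| * c^k) := by
  have hc0 : (0:ℝ) < c := lt_trans one_pos hc
  have h1q : 0 < 1 - c⁻¹ := by linarith [hq1 hc]
  apply summable_of_ratio_norm_eventually_le (r := 1/2) (by norm_num)
  have htend : Tendsto (fun k : ℕ => c * c⁻¹^k / (1 - c⁻¹)) atTop (𝓝 0) := by
    have := (tendsto_pow_atTop_nhds_zero_of_lt_one (hq0 hc).le (hq1 hc)).const_mul c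
    simpa using this.div_const (1 - c⁻¹)
  filter_upwards [htend.eventually_le_const (by norm_num : (0:ℝ) < 1/2)] with k hk
  have hArec := A_succ hc k
  have h6 := one_sub_q_pos hc k
  have hAabs : |A c (k+1)| * (1 - c⁻¹^(k+1)) = c⁻¹^k * |A c k| := by
    have := congrArg abs hArec
    rwa [abs_mul, abs_of_pos h6, abs_mul, abs_neg, abs_of_nonneg (pow_nonneg (hq0 hc).le k)] at this
  have e1 : |A c (k+1)| = c⁻¹^k * |A c k| / (1 - c⁻¹^(k+1)) := by
    rw [← hAabs, mul_div_cancel_right₀ _ h6.ne']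
  have hqq : c⁻¹^(k+1) ≤ c⁻¹ := by
    calc c⁻¹^(k+1) ≤ c⁻¹^1 := pow_le_pow_of_le_one (hq0 hc).le (hq1 hc).le (by omega)
      _ = c⁻¹ := pow_one _
  have hA1 : |A c (k+1)| ≤ c⁻¹^k * |A c k| / (1 - c⁻¹) := by
    rw [e1]
    gcongr

  simp only [Real.norm_eq_abs, abs_mul, abs_abs, abs_pow, abs_of_pos hc0]
  calc |A c (k+1)| * c^(k+1) ≤ (c⁻¹^k * |A c k| / (1 - c⁻¹)) * c^(k+1) := by
        apply mul_le_mul_of_nonneg_right hA1 (by positivity)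
    _ = (c * c⁻¹^k / (1-c⁻¹)) * (|A c k| * c^k) := by
        field_simp
        ring
    _ ≤ (1/2) * (|A c k| * c^k) := by
        apply mul_le_mul_of_nonneg_right hk (by positivity)

lemma summable_log (hc : 1 < c) : Summable (fun l : ℕ => Real.log (1 - c⁻¹ ^ (l+1))) := by
  have h1q : 0 < 1 - c⁻¹ := by linarith [hq1 hc]
  have Sg : Summable (fun l : ℕ => c⁻¹^(l+1) / (1 - c⁻¹)) := by
    have h : Summable (fun l : ℕ => c⁻¹^l * (c⁻¹ / (1 - c⁻¹))) :=
      (summable_geometric_of_lt_one (hq0 hc).le (hq1 hc)).mul_right _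
    apply h.congr
    intro l
    rw [pow_succ]
    ring
  have hle : ∀ l : ℕ, |Real.log (1 - c⁻¹ ^ (l+1))| ≤ c⁻¹^(l+1) / (1 - c⁻¹) := by
    intro l
    have hx : 0 < 1 - c⁻¹ ^ (l+1) := one_sub_q_pos hc l
    have hlog : Real.log (1 - c⁻¹^(l+1)) ≤ 0 :=
      Real.log_nonpos hx.le (by linarith [pow_pos (hq0 hc) (l+1)])
    rw [abs_of_nonpos hlog, ← Real.log_inv]
    have hb : Real.log (1 - c⁻¹^(l+1))⁻¹ ≤ (1 - c⁻¹^(l+1))⁻¹ - 1 :=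
      Real.log_le_sub_one_of_pos (by positivity)
    have hcl : (1:ℝ) < c^(l+1) := one_lt_pow₀ hc (Nat.succ_ne_zero l)
    have hne : c^(l+1) - 1 ≠ 0 := by linarith
    have hinv : (1 - c⁻¹^(l+1))⁻¹ - 1 = c⁻¹^(l+1) / (1 - c⁻¹^(l+1)) := by
      rw [eq_div_iff hx.ne', sub_mul, inv_mul_cancel₀ hx.ne']; ring
    have hmono : c⁻¹^(l+1) / (1 - c⁻¹^(l+1)) ≤ c⁻¹^(l+1) / (1 - c⁻¹) := by
      have hqq : c⁻¹^(l+1) ≤ c⁻¹ := by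
        calc c⁻¹^(l+1) ≤ c⁻¹^1 := pow_le_pow_of_le_one (hq0 hc).le (hq1 hc).le (by omega)
          _ = c⁻¹ := pow_one _
      gcongr
    linarith
  exact Summable.of_abs (Summable.of_nonneg_of_le (fun l => abs_nonneg _) hle Sg)

lemma hasProdP (hc : 1 < c) :
    HasProd (fun l : ℕ => 1 - c⁻¹ ^ (l+1)) (∏' l : ℕ, (1 - c⁻¹ ^ (l+1))) := by
  exact (Real.multipliable_of_summable_log (fun l => one_sub_q_pos hc l) (summable_log hc)).hasProd

lemma P_pos (hc : 1 < c) : 0 < ∏' l : ℕ, (1 - c⁻¹ ^ (l+1)) := by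
  have := Real.rexp_tsum_eq_tprod (f := fun l : ℕ => 1 - c⁻¹ ^ (l+1))
    (fun l => one_sub_q_pos hc l) (summable_log hc)
  rw [← this]
  exact Real.exp_pos _

lemma Qtend (hc : 1 < c) :
    Tendsto (fun n => Q c n) atTop (𝓝 (∏' l : ℕ, (1 - c⁻¹ ^ (l+1)))) := by
  simpa [Q] using (hasProdP hc).tendsto_prod_nat

lemma Q_anti (hc : 1 < c) {n N : ℕ} (h : n ≤ N) : Q c N ≤ Q c n := by
  obtain ⟨m, rfl⟩ := Nat.exists_eq_add_of_le h
  induction m with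
  | zero => simp
  | succ m IH =>
    have : Q c (n + m + 1) = Q c (n+m) * (1 - c⁻¹^(n+m+1)) := Q_succ c (n+m)
    rw [show n + (m+1) = n + m + 1 by omega, this]
    calc Q c (n+m) * (1 - c⁻¹^(n+m+1)) ≤ Q c (n+m) * 1 := by
          apply mul_le_mul_of_nonneg_left _ (Q_pos hc (n+m)).le
          linarith [pow_pos (hq0 hc) (n+m+1)]
      _ = Q c (n+m) := mul_one _
      _ ≤ Q c n := IH (by omega)

lemma P_le_Q (hc : 1 < c) (n : ℕ) : (∏' l : ℕ, (1 - c⁻¹ ^ (l+1))) ≤ Q c n := by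
  apply le_of_tendsto (Qtend hc)
  filter_upwards [eventually_ge_atTop n] with N hN
  exact Q_anti hc hN

lemma Q_sub_P (hc : 1 < c) (n : ℕ) :
    Q c n - (∏' l : ℕ, (1 - c⁻¹ ^ (l+1))) ≤ c⁻¹^(n+1) / (1 - c⁻¹) := by
  have h1q : 0 < 1 - c⁻¹ := by linarith [hq1 hc]
  have claim : ∀ m, Q c n - Q c (n+m) ≤ (c⁻¹^(n+1) - c⁻¹^(n+m+1))/(1-c⁻¹) := by
    intro m
    induction m with
    | zero => simp
    | succ m IH =>
      have hQs : Q c (n+m+1) = Q c (n+m) * (1 - c⁻¹^(n+m+1)) := Q_succ c (n+m)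
      have hle1 : Q c (n+m) ≤ 1 := Q_le_one hc (n+m)
      have hp : 0 < c⁻¹^(n+m+1) := pow_pos (hq0 hc) _
      have hps : c⁻¹^(n+m+2) = c⁻¹^(n+m+1) * c⁻¹ := pow_succ c⁻¹ (n+m+1)
      have hthis : Q c n - Q c (n+m+1) ≤ (c⁻¹^(n+1) - c⁻¹^(n+m+1))/(1-c⁻¹) + c⁻¹^(n+m+1) := by
        rw [hQs]
        nlinarith [mul_nonneg (sub_nonneg.mpr hle1) hp.le]
      rw [div_add' _ _ _ h1q.ne'] at hthis
      calc Q c n - Q c (n+m+1) ≤ ((c⁻¹^(n+1) - c⁻¹^(n+m+1)) + c⁻¹^(n+m+1)*(1-c⁻¹))/(1-c⁻¹) := hthis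
        _ = (c⁻¹^(n+1) - c⁻¹^(n+m+1+1))/(1-c⁻¹) := by rw [pow_succ]; ring_nf
  have htend : Tendsto (fun m => Q c n - Q c (n+m)) atTop
      (𝓝 (Q c n - (∏' l : ℕ, (1 - c⁻¹ ^ (l+1))))) := by
    apply Tendsto.const_sub
    have := (Qtend hc).comp (tendsto_add_atTop_nat n)
    simpa [Function.comp_def, Nat.add_comm] using this
  apply le_of_tendsto htend
  filter_upwards with m
  calc Q c n - Q c (n+m) ≤ (c⁻¹^(n+1) - c⁻¹^(n+m+1))/(1-c⁻¹) := claim m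
    _ ≤ c⁻¹^(n+1)/(1-c⁻¹) := by
        gcongr
        linarith [pow_pos (hq0 hc) (n+m+1)]

lemma main_bounds (hc : 1 < c) (u : ℝ) (hu : 0 < u) :
    Summable (fun k => |A c k * Real.exp (-(c^k * u))|) ∧
    0 ≤ ∑' k, A c k * Real.exp (-(c^k * u)) ∧
    (∑' k, A c k * Real.exp (-(c^k * u))) ≤ ∏' l : ℕ, (1 - c⁻¹ ^ (l+1)) := by
  have hc0 : (0:ℝ) < c := lt_trans one_pos hc
  have hcne : c ≠ 0 := hc0.ne'
  have h1q : 0 < 1 - c⁻¹ := by linarith [hq1 hc]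
  set P := ∏' l : ℕ, (1 - c⁻¹ ^ (l+1)) with hPdef
  have hPpos : 0 < P := P_pos hc
  have hexple : ∀ k : ℕ, Real.exp (-(c^k * u)) ≤ 1 := by
    intro k
    apply Real.exp_le_one_iff.mpr
    have : 0 < c^k * u := by positivity
    linarith
  have habs_le : ∀ k : ℕ, |A c k * Real.exp (-(c^k * u))| ≤ |A c k| * c^k := by
    intro k
    rw [abs_mul, Real.abs_exp]
    have h2 : (1:ℝ) ≤ c^k := one_le_pow₀ hc.le
    calc |A c k| * Real.exp (-(c^k * u)) ≤ |A c k| * 1 :=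
          mul_le_mul_of_nonneg_left (hexple k) (abs_nonneg _)
      _ = |A c k| := mul_one _
      _ ≤ |A c k| * c^k := le_mul_of_one_le_right (abs_nonneg _) h2
  have hSabs : Summable (fun k => |A c k * Real.exp (-(c^k * u))|) :=
    Summable.of_nonneg_of_le (fun k => abs_nonneg _) habs_le (summableA hc)
  have hSexp : Summable (fun k => A c k * Real.exp (-(c^k * u))) :=
    summable_abs_iff.mp hSabs
  refine ⟨hSabs, ?_⟩
  set F := ∑' k, A c k * Real.exp (-(c^k * u)) with hFdef
  have hpart : Tendsto (fun n => ∑ k ∈ Finset.range (n+1), A c k * Real.exp (-(c^k * u)))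
      atTop (𝓝 F) :=
    (hSexp.hasSum.tendsto_sum_nat).comp (tendsto_add_atTop_nat 1)
  set T := ∑' k, |A c k| * c^k with hTdef
  have hbound : ∀ n : ℕ, |P * g c n u - ∑ k ∈ Finset.range (n+1), A c k * Real.exp (-(c^k*u))|
      ≤ c⁻¹^(n+1) * (T / ((1-c⁻¹) * P)) := by
    intro n
    have step1 : P * g c n u - ∑ k ∈ Finset.range (n+1), A c k * Real.exp (-(c^k*u))
        = ∑ k ∈ Finset.range (n+1),
            (A c k * Real.exp (-(c^k*u)) * ((P - Q c (n-k))/Q c (n-k))) := by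
      rw [g, Finset.mul_sum, ← Finset.sum_sub_distrib]
      apply Finset.sum_congr rfl
      intro k _
      have hQ : Q c (n-k) ≠ 0 := (Q_pos hc (n-k)).ne'
      field_simp
    rw [step1]
    have perterm : ∀ k ∈ Finset.range (n+1),
        |A c k * Real.exp (-(c^k*u)) * ((P - Q c (n-k))/Q c (n-k))|
        ≤ |A c k| * c^k * (c⁻¹^(n+1) / ((1-c⁻¹) * P)) := by
      intro k hk
      rw [Finset.mem_range] at hk
      have hQp := Q_pos hc (n-k)
      have hsplit : c⁻¹^(n-k+1) = c⁻¹^(n+1) * c^k := by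
        have hnk : (n-k+1) + k = n+1 := by omega
        have h' : c⁻¹^(n+1) = c⁻¹^(n-k+1) * c⁻¹^k := by rw [← pow_add, hnk]
        have hck : c⁻¹^k * c^k = 1 := by
          rw [inv_pow, inv_mul_cancel₀ (pow_ne_zero k hcne)]
        rw [h', mul_assoc, hck, mul_one]
      have hX : (Q c (n-k) - P)/(Q c (n-k)) ≤ c^k * (c⁻¹^(n+1)/((1-c⁻¹)*P)) := by
        have h1 := Q_sub_P hc (n-k)
        have h2 : (Q c (n-k) - P)/(Q c (n-k)) ≤ (c⁻¹^(n-k+1)/(1-c⁻¹))/P :=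
          div_le_div₀ (by positivity) h1 hPpos (P_le_Q hc (n-k))
        calc (Q c (n-k) - P)/(Q c (n-k)) ≤ (c⁻¹^(n-k+1)/(1-c⁻¹))/P := h2
          _ = c^k * (c⁻¹^(n+1)/((1-c⁻¹)*P)) := by
              rw [hsplit, div_div, ← mul_div_assoc, mul_comm (c⁻¹^(n+1)) (c^k)]
      have habs1 : |A c k * Real.exp (-(c^k*u)) * ((P - Q c (n-k))/Q c (n-k))|
          = |A c k| * Real.exp (-(c^k*u)) * ((Q c (n-k) - P)/Q c (n-k)) := by
        rw [abs_mul, abs_mul, Real.abs_exp, abs_div, abs_of_pos hQp,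
          abs_of_nonpos (by linarith [P_le_Q hc (n-k)] : P - Q c (n-k) ≤ 0), neg_sub]
      rw [habs1]
      calc |A c k| * Real.exp (-(c^k*u)) * ((Q c (n-k) - P)/Q c (n-k))
          ≤ |A c k| * 1 * (c^k * (c⁻¹^(n+1)/((1-c⁻¹)*P))) := by
            have hnn : 0 ≤ (Q c (n-k) - P)/Q c (n-k) := by
              apply div_nonneg _ hQp.le
              linarith [P_le_Q hc (n-k)]
            apply mul_le_mul
            · exact mul_le_mul_of_nonneg_left (hexple k) (abs_nonneg _)
            · exact hX
            · exact hnn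
            · positivity
        _ = |A c k| * c^k * (c⁻¹^(n+1) / ((1-c⁻¹) * P)) := by ring
    calc |∑ k ∈ Finset.range (n+1), (A c k * Real.exp (-(c^k*u)) * ((P - Q c (n-k))/Q c (n-k)))|
        ≤ ∑ k ∈ Finset.range (n+1), |A c k * Real.exp (-(c^k*u)) * ((P - Q c (n-k))/Q c (n-k))| :=
          Finset.abs_sum_le_sum_abs _ _
      _ ≤ ∑ k ∈ Finset.range (n+1), |A c k| * c^k * (c⁻¹^(n+1) / ((1-c⁻¹) * P)) :=
          Finset.sum_le_sum perterm
      _ = (∑ k ∈ Finset.range (n+1), |A c k| * c^k) * (c⁻¹^(n+1) / ((1-c⁻¹) * P)) :=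
          (Finset.sum_mul _ _ _).symm
      _ ≤ T * (c⁻¹^(n+1) / ((1-c⁻¹) * P)) := by
          apply mul_le_mul_of_nonneg_right _ (by positivity)
          exact Summable.sum_le_tsum _ (fun k _ => by positivity) (summableA hc)
      _ = c⁻¹^(n+1) * (T / ((1-c⁻¹) * P)) := by ring
  have hb0 : Tendsto (fun n : ℕ => c⁻¹^(n+1) * (T / ((1-c⁻¹) * P))) atTop (𝓝 0) := by
    have h1 : Tendsto (fun n : ℕ => c⁻¹^(n+1)) atTop (𝓝 0) :=
      (tendsto_pow_atTop_nhds_zero_of_lt_one (hq0 hc).le (hq1 hc)).comp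
        (tendsto_add_atTop_nat 1)
    simpa using h1.mul_const (T / ((1-c⁻¹) * P))
  have hdiff : Tendsto (fun n => P * g c n u
      - ∑ k ∈ Finset.range (n+1), A c k * Real.exp (-(c^k*u))) atTop (𝓝 0) := by
    apply squeeze_zero_norm _ hb0
    intro n
    rw [Real.norm_eq_abs]
    exact hbound n
  have hPg : Tendsto (fun n => P * g c n u) atTop (𝓝 F) := by
    have := hdiff.add hpart
    simpa using this
  constructor
  · apply ge_of_tendsto hPg
    filter_upwards with n
    exact mul_nonneg hPpos.le (g_nonneg hc n u hu.le)
  · apply le_of_tendsto hPg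
    filter_upwards with n
    calc P * g c n u ≤ P * 1 := mul_le_mul_of_nonneg_left (g_le_one hc n u hu.le) hPpos.le
      _ = P := mul_one _


end AS

theorem limit_profile_in_unit_interval (c : ℝ) (hc : 1 < c) (a : ℕ → ℝ)
    (ha0 : a 0 = 1)
    (ha : ∀ k : ℕ, 1 ≤ k →
      a k = (-1 : ℝ) ^ k * c ^ k / ∏ l ∈ Finset.Icc 1 k, (c ^ l - 1))
    (binf : ℝ) (hbinf : binf = (∏' l : ℕ, (1 - c⁻¹ ^ (l + 1)))⁻¹)
    (i : ℤ) (t : ℝ) (ht : 0 < t) :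
    Summable (fun k : ℕ => |a k * Real.exp (-(c ^ (-i + (k : ℤ)) * t))|) ∧
    binf * (∑' k : ℕ, a k * Real.exp (-(c ^ (-i + (k : ℤ)) * t))) ∈
      Set.Icc (0 : ℝ) 1 := by
  have hc0 : (0:ℝ) < c := lt_trans one_pos hc
  have hcne : c ≠ 0 := hc0.ne'
  have hA : ∀ k : ℕ, a k = AS.A c k := by
    intro k
    match k with
    | 0 => rw [ha0, AS.A_zero]
    | (k+1) => rw [ha (k+1) (by omega)]; rfl
  set u : ℝ := c ^ (-i : ℤ) * t with hudef
  have hu : 0 < u := mul_pos (zpow_pos hc0 _) ht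
  have hexp_eq : ∀ k : ℕ, c ^ (-i + (k:ℤ)) * t = c^k * u := by
    intro k
    rw [zpow_add₀ hcne, zpow_natCast]
    ring
  have hfun : (fun k : ℕ => a k * Real.exp (-(c ^ (-i + (k : ℤ)) * t)))
      = fun k : ℕ => AS.A c k * Real.exp (-(c^k * u)) := by
    funext k
    rw [hA k, hexp_eq k]
  obtain ⟨hsum, h0, hle⟩ := AS.main_bounds hc u hu
  constructor
  · have heq : (fun k : ℕ => |a k * Real.exp (-(c ^ (-i + (k : ℤ)) * t))|)
        = fun k : ℕ => |AS.A c k * Real.exp (-(c^k * u))| := by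
      funext k
      rw [hA k, hexp_eq k]
    rw [heq]
    exact hsum
  · have heq2 : (∑' k : ℕ, a k * Real.exp (-(c ^ (-i + (k : ℤ)) * t)))
        = ∑' k : ℕ, AS.A c k * Real.exp (-(c^k * u)) := by
      apply tsum_congr
      intro k
      rw [hA k, hexp_eq k]
    rw [heq2, hbinf, Set.mem_Icc]
    have hPpos := AS.P_pos hc
    constructor
    · exact mul_nonneg (inv_nonneg.mpr hPpos.le) h0
    · calc (∏' l : ℕ, (1 - c⁻¹ ^ (l + 1)))⁻¹ * (∑' k : ℕ, AS.A c k * Real.exp (-(c^k * u)))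
          ≤ (∏' l : ℕ, (1 - c⁻¹ ^ (l + 1)))⁻¹ * (∏' l : ℕ, (1 - c⁻¹ ^ (l + 1))) :=
            mul_le_mul_of_nonneg_left hle (inv_nonneg.mpr hPpos.le)
        _ = 1 := inv_mul_cancel₀ hPpos.ne'
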